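/- arXiv:2002.00620 — 3 statements merged into one kernel-verified Lean document; each statement's English description precedes it below -/
import Mathlib

section
/- Assume the hierarchy S is well-formed. Then for all x, y, z in the extended hierarchy, join(x, y) ≤ z if and only if x ≤ z and y ≤ z. -/
/-- Minimal common subclasses of `a` and `b`: the minimal elements of the set
`{c | a ≤ c ∧ b ≤ c}` of common upper bounds of `a` and `b`. -/
def mcs {S : Type*} [PartialOrder S] (a b : S) : Set S :=
  {c | Minimal (fun c => a ≤ c ∧ b ≤ c) c}

open Classical in
/-- The join operator on the extended hierarchy `WithTop S`:
`join a b = c` if `a, b ∈ S` and `mcs a b = {c}`, and `⊤` otherwise. -/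
noncomputable def hjoin {S : Type*} [PartialOrder S] : WithTop S → WithTop S → WithTop S
  | some a, some b => if h : ∃ c, mcs a b = {c} then some h.choose else ⊤
  | _, _ => ⊤

/-- In a well-formed hierarchy, `join x y ≤ z` iff `x ≤ z` and `y ≤ z`. -/
theorem hjoin_le_iff {S : Type*} [Fintype S] [PartialOrder S]
    (hwf : ∀ a b : S, (mcs a b).Subsingleton) (x y z : WithTop S) :
    hjoin x y ≤ z ↔ x ≤ z ∧ y ≤ z := by
  match x, y with
  | ⊤, y =>
    simp only [hjoin, top_le_iff]
    constructor
    · rintro rfl; exact ⟨rfl, le_top⟩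
    · rintro ⟨h, -⟩; exact h
  | some a, ⊤ =>
    simp only [hjoin, top_le_iff]
    constructor
    · rintro rfl; exact ⟨le_top, rfl⟩
    · rintro ⟨-, h⟩; exact h
  | some a, some b =>
    show @dite _ (∃ c, mcs a b = {c}) (Classical.propDecidable _) (fun h => ((h.choose : S) : WithTop S)) (fun _ => ⊤) ≤ z ↔ _
    split_ifs with h
    · have hc : h.choose ∈ mcs a b := by
        have hs := h.choose_spec
        have : h.choose ∈ ({h.choose} : Set S) := rfl
        rwa [← hs] at this
      obtain ⟨⟨hac, hbc⟩, hmin⟩ := hc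
      constructor
      · intro hle
        exact ⟨le_trans (WithTop.coe_le_coe.mpr hac) hle,
               le_trans (WithTop.coe_le_coe.mpr hbc) hle⟩
      · rintro ⟨haz, hbz⟩
        match z with
        | ⊤ => exact le_top
        | some z =>
          have haz' : a ≤ z := WithTop.coe_le_coe.mp haz
          have hbz' : b ≤ z := WithTop.coe_le_coe.mp hbz
          obtain ⟨m, hmz, hm⟩ := exists_minimal_le_of_wellFoundedLT (P := fun c => a ≤ c ∧ b ≤ c) (a := z)
            ⟨haz', hbz'⟩
          have : m = h.choose := by
            have : m ∈ mcs a b := hm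
            rw [h.choose_spec] at this; exact this
          exact WithTop.coe_le_coe.mpr (this ▸ hmz)
    · constructor
      · intro hle
        exact ⟨le_trans le_top hle, le_trans le_top hle⟩
      · rintro ⟨haz, hbz⟩
        match z with
        | ⊤ => exact le_rfl
        | some z =>
          exfalso
          have haz' : a ≤ z := WithTop.coe_le_coe.mp haz
          have hbz' : b ≤ z := WithTop.coe_le_coe.mp hbz
          obtain ⟨m, hmz, hm⟩ := exists_minimal_le_of_wellFoundedLT (P := fun c => a ≤ c ∧ b ≤ c) (a := z)
            ⟨haz', hbz'⟩
          exact h ⟨m, Set.eq_singleton_iff_unique_mem.mpr ⟨hm, fun c hc => hwf a b hc hm⟩⟩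
end

section
/- Assume the hierarchy S is well-formed. Then the join operator on the extended hierarchy is associative, commutative, and idempotent; that is, the extended well-formed hierarchy equipped with join is a join-semilattice. -/
/-- In a well-formed hierarchy, the join operator on the extended hierarchy is
associative, commutative, and idempotent, i.e., it is a join-semilattice operation. -/
theorem hjoin_assoc_comm_idem {S : Type*} [Fintype S] [PartialOrder S]
    (hwf : ∀ a b : S, (mcs a b).Subsingleton) :
    (∀ x y z : WithTop S, hjoin (hjoin x y) z = hjoin x (hjoin y z)) ∧
    (∀ x y : WithTop S, hjoin x y = hjoin y x) ∧
    (∀ x : WithTop S, hjoin x x = x) := by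
  classical
  -- Step 0 : from any common upper bound, get a minimal common upper bound below it.
  have hmin : ∀ a b e : S, a ≤ e → b ≤ e → ∃ m ∈ mcs a b, m ≤ e := by
    intro a b e hae hbe
    obtain ⟨m, hm, hmin⟩ := Set.Finite.exists_minimalFor id
      {c | (a ≤ c ∧ b ≤ c) ∧ c ≤ e} (Set.toFinite _) ⟨e, ⟨hae, hbe⟩, le_refl e⟩
    refine ⟨m, ⟨hm.1, ?_⟩, hm.2⟩
    intro c hc hcm
    exact hmin (j := c) ⟨hc, le_trans hcm hm.2⟩ hcm
  -- Step 1 : `hjoin x y` is the least upper bound of `{x, y}` in `WithTop S`.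
  have key : ∀ x y : WithTop S, IsLUB {x, y} (hjoin x y) := by
    intro x y
    match x, y with
    | ⊤, y =>
        constructor
        · intro d hd; rcases hd with rfl | rfl <;> simp [hjoin]
        · intro d hd
          have ht : hjoin (⊤ : WithTop S) y = ⊤ := by cases y <;> rfl
          rw [ht]
          exact hd (Set.mem_insert _ _)
    | (a : S), ⊤ =>
        constructor
        · intro d hd; rcases hd with rfl | rfl <;> simp [hjoin]
        · intro d hd
          have := hd (Set.mem_insert_of_mem _ rfl)
          simpa [hjoin] using this
    | (a : S), (b : S) =>
        by_cases h : ∃ c, mcs a b = {c}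
        · have hj : hjoin (a : WithTop S) b = (h.choose : WithTop S) := dif_pos h
          have hc : mcs a b = {h.choose} := h.choose_spec
          have hcmem : h.choose ∈ mcs a b := by
            have := Set.mem_singleton h.choose; rwa [← hc] at this
          rw [hj]
          constructor
          · intro d hd
            rcases hd with rfl | rfl
            · exact_mod_cast hcmem.1.1
            · exact_mod_cast hcmem.1.2
          · intro d hd
            match d with
            | ⊤ => exact le_top
            | (e : S) =>
                have hae : (a : WithTop S) ≤ e := hd (Set.mem_insert _ _)
                have hbe : (b : WithTop S) ≤ e := hd (Set.mem_insert_of_mem _ rfl)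
                obtain ⟨m, hm, hme⟩ := hmin a b e (by exact_mod_cast hae)
                  (by exact_mod_cast hbe)
                have : m = h.choose := by
                  have : m ∈ ({h.choose} : Set S) := hc ▸ hm
                  simpa using this
                exact_mod_cast this ▸ hme
        · have hj : hjoin (a : WithTop S) b = ⊤ := by simp [hjoin, h]
          rw [hj]
          constructor
          · intro d hd; exact le_top
          · intro d hd
            match d with
            | ⊤ => exact le_refl _
            | (e : S) =>
                exfalso
                have hae : (a : WithTop S) ≤ e := hd (Set.mem_insert _ _)
                have hbe : (b : WithTop S) ≤ e := hd (Set.mem_insert_of_mem _ rfl)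
                obtain ⟨m, hm, -⟩ := hmin a b e (by exact_mod_cast hae)
                  (by exact_mod_cast hbe)
                exact h ⟨m, Set.eq_singleton_iff_unique_mem.2
                  ⟨hm, fun c hc => hwf a b hc hm⟩⟩
  refine ⟨?_, ?_, ?_⟩
  · intro x y z
    have h1 : IsLUB {x, y, z} (hjoin (hjoin x y) z) := by
      have hxy := key x y
      have h2 := key (hjoin x y) z
      constructor
      · intro d hd
        rcases hd with rfl | rfl | rfl
        · exact le_trans (hxy.1 (Set.mem_insert _ _)) (h2.1 (Set.mem_insert _ _))
        · exact le_trans (hxy.1 (Set.mem_insert_of_mem _ rfl)) (h2.1 (Set.mem_insert _ _))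
        · exact h2.1 (Set.mem_insert_of_mem _ rfl)
      · intro d hd
        refine h2.2 ?_
        intro e he
        rcases he with rfl | rfl
        · exact hxy.2 fun f hf => by
            rcases hf with rfl | rfl
            · exact hd (Set.mem_insert _ _)
            · exact hd (Set.mem_insert_of_mem _ (Set.mem_insert _ _))
        · exact hd (Set.mem_insert_of_mem _ (Set.mem_insert_of_mem _ rfl))
    have h2 : IsLUB {x, y, z} (hjoin x (hjoin y z)) := by
      have hyz := key y z
      have h3 := key x (hjoin y z)
      constructor
      · intro d hd
        rcases hd with rfl | rfl | rfl
        · exact h3.1 (Set.mem_insert _ _)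
        · exact le_trans (hyz.1 (Set.mem_insert _ _)) (h3.1 (Set.mem_insert_of_mem _ rfl))
        · exact le_trans (hyz.1 (Set.mem_insert_of_mem _ rfl))
            (h3.1 (Set.mem_insert_of_mem _ rfl))
      · intro d hd
        refine h3.2 ?_
        intro e he
        rcases he with rfl | rfl
        · exact hd (Set.mem_insert _ _)
        · exact hyz.2 fun f hf => by
            rcases hf with rfl | rfl
            · exact hd (Set.mem_insert_of_mem _ (Set.mem_insert _ _))
            · exact hd (Set.mem_insert_of_mem _ (Set.mem_insert_of_mem _ rfl))
    exact h1.unique h2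
  · intro x y
    exact (key x y).unique (Set.pair_comm x y ▸ key y x)
  · intro x
    have h := key x x
    rw [Set.pair_eq_singleton] at h
    exact h.unique isLUB_singleton
end

section
/- Assume the hierarchy S is well-formed. Then for all x and y in the extended hierarchy, join(x, y) is the least upper bound of x and y: x ≤ join(x, y), y ≤ join(x, y), and every z in the extended hierarchy with x ≤ z and y ≤ z satisfies join(x, y) ≤ z. Consequently the extended hierarchy with join is a semilattice with supremum operation join. -/
/-- In a well-formed hierarchy, `join x y` is the least upper bound of `x` and `y`;
hence the extended hierarchy with `join` is a semilattice with supremum `join`. -/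
theorem hjoin_isLUB {S : Type*} [Fintype S] [PartialOrder S]
    (hwf : ∀ a b : S, (mcs a b).Subsingleton) (x y : WithTop S) :
    x ≤ hjoin x y ∧ y ≤ hjoin x y ∧ ∀ z : WithTop S, x ≤ z → y ≤ z → hjoin x y ≤ z := by
  match x, y with
  | ⊤, y =>
    refine ⟨?_, le_top.trans ?_, fun z hz _ => ?_⟩
    · show (⊤ : WithTop S) ≤ hjoin ⊤ y; cases y <;> simp [hjoin]
    · show (⊤ : WithTop S) ≤ hjoin ⊤ y; cases y <;> simp [hjoin]
    · exact le_trans (by cases y <;> simp [hjoin]) hz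
  | (some a), ⊤ =>
    refine ⟨le_top.trans ?_, ?_, fun z _ hz => ?_⟩
    · show (⊤ : WithTop S) ≤ hjoin (some a) ⊤; simp [hjoin]
    · show (⊤ : WithTop S) ≤ hjoin (some a) ⊤; simp [hjoin]
    · exact le_trans (by simp [hjoin]) hz
  | (some a), (some b) =>
    by_cases h : ∃ c, mcs a b = {c}
    · have hc : h.choose ∈ mcs a b := (Set.eq_singleton_iff_unique_mem.mp h.choose_spec).1
      have hab : a ≤ h.choose ∧ b ≤ h.choose := (show Minimal (fun c => a ≤ c ∧ b ≤ c) h.choose from hc).prop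
      rw [show hjoin (Option.some a) (Option.some b) = (h.choose : WithTop S) from dif_pos h]
      refine ⟨WithTop.coe_le_coe.mpr hab.1, WithTop.coe_le_coe.mpr hab.2, fun z hz1 hz2 => ?_⟩
      match z with
      | ⊤ => exact le_top
      | (some d) =>
        have hd : a ≤ d ∧ b ≤ d := ⟨WithTop.coe_le_coe.mp hz1, WithTop.coe_le_coe.mp hz2⟩
        obtain ⟨m, hmd, hm⟩ := exists_minimal_le_of_wellFoundedLT (fun c => a ≤ c ∧ b ≤ c) d hd
        have : m ∈ ({h.choose} : Set S) := h.choose_spec ▸ hm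
        exact WithTop.coe_le_coe.mpr (this ▸ hmd)
    · rw [show hjoin (Option.some a) (Option.some b) = ⊤ from dif_neg h]
      refine ⟨le_top, le_top, fun z hz1 hz2 => ?_⟩
      match z with
      | ⊤ => exact le_rfl
      | (some d) =>
        exfalso
        have hd : a ≤ d ∧ b ≤ d := ⟨WithTop.coe_le_coe.mp hz1, WithTop.coe_le_coe.mp hz2⟩
        obtain ⟨m, _, hm⟩ := exists_minimal_le_of_wellFoundedLT (fun c => a ≤ c ∧ b ≤ c) d hd
        exact h ⟨m, (hwf a b).eq_singleton_of_mem hm⟩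
end
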